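/- Let d_n and A_n (n ≥ 0) be the classical derangement polynomials (counting fixed-point-free permutations of [n] by excedances) and Eulerian polynomials (counting all permutations of [n] by excedances). Then the pair of families ({A_n},{d_n}) is the unique pair of polynomial families satisfying: d_0 = A_0 = 1; A_n = Σ_{k=0}^n C(n,k) d_k for all n; t^n d_n(1/t) = d_n(t) for all n; and t^n A_n(1/t) = t·A_n(t) for all n ≥ 1. -/

import Mathlib

open Polynomial

/-- The Eulerian polynomial `Aₙ(t) = Σ_{σ ∈ Sₙ} t^{exc(σ)}`, where
`exc(σ) = #{i : σ(i) > i}`. -/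
noncomputable def eulerianPoly (n : ℕ) : Polynomial ℤ :=
  ∑ σ : Equiv.Perm (Fin n), X ^ (Finset.univ.filter fun i => i < σ i).card

/-- The derangement polynomial `dₙ(t) = Σ_{σ ∈ Dₙ} t^{exc(σ)}`, summing over
fixed-point-free permutations of `[n]`. -/
noncomputable def derangementPoly (n : ℕ) : Polynomial ℤ :=
  ∑ σ ∈ Finset.univ.filter (fun σ : Equiv.Perm (Fin n) => ∀ i, σ i ≠ i),
    X ^ (Finset.univ.filter fun i => i < σ i).card

/-- The defining properties: `d₀ = A₀ = 1`, `Aₙ = Σ_k C(n,k) d_k`,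
`tⁿ dₙ(1/t) = dₙ`, and `tⁿ Aₙ(1/t) = t·Aₙ` for `n ≥ 1`. -/
def EulerPairProps (A d : ℕ → Polynomial ℤ) : Prop :=
  d 0 = 1 ∧ A 0 = 1 ∧
  (∀ n, (d n).natDegree ≤ n) ∧
  (∀ n, A n = ∑ k ∈ Finset.range (n + 1), (n.choose k : Polynomial ℤ) * d k) ∧
  (∀ n, reflect n (d n) = d n) ∧
  (∀ n, 1 ≤ n → reflect n (A n) = X * A n)

/-! ### Auxiliary definitions and lemmas -/

section Aux

open Finset Equiv

variable {n m k : ℕ}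

/-- The excedance count of a permutation of `Fin n`. -/
def pexc (σ : Equiv.Perm (Fin n)) : ℕ := (Finset.univ.filter fun i => i < σ i).card

lemma pexc_le (σ : Equiv.Perm (Fin n)) : pexc σ ≤ n := by
  simpa [pexc] using (Finset.card_filter_le Finset.univ fun i => i < σ i)

lemma aux_reflect_sum {α : Type*} (N : ℕ) (s : Finset α) (f : α → Polynomial ℤ) :
    reflect N (∑ x ∈ s, f x) = ∑ x ∈ s, reflect N (f x) :=
  map_sum (AddMonoidHom.mk' (fun p => reflect N p) (fun p q => reflect_add p q N)) f s

lemma aux_card_le_inv (σ : Equiv.Perm (Fin n)) :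
    (Finset.univ.filter fun i => σ⁻¹ i ≤ i).card = (Finset.univ.filter fun i => i ≤ σ i).card := by
  apply Finset.card_bij' (fun a _ => σ⁻¹ a) (fun b _ => σ b)
  · intro a ha
    simp only [Finset.mem_filter, Finset.mem_univ, true_and] at ha ⊢
    simpa using ha
  · intro b hb
    simp only [Finset.mem_filter, Finset.mem_univ, true_and] at hb ⊢
    simpa using hb
  · intro a _; simp
  · intro b _; simp

lemma aux_card_lt_inv (σ : Equiv.Perm (Fin n)) :
    (Finset.univ.filter fun i => σ⁻¹ i < i).card = (Finset.univ.filter fun i => i < σ i).card := by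
  apply Finset.card_bij' (fun a _ => σ⁻¹ a) (fun b _ => σ b)
  · intro a ha
    simp only [Finset.mem_filter, Finset.mem_univ, true_and] at ha ⊢
    simpa using ha
  · intro b hb
    simp only [Finset.mem_filter, Finset.mem_univ, true_and] at hb ⊢
    simpa using hb
  · intro a _; simp
  · intro b _; simp

lemma pexc_add_compl (σ : Equiv.Perm (Fin n)) :
    pexc σ + (Finset.univ.filter fun i => σ i ≤ i).card = n := by
  have h := Finset.card_filter_add_card_filter_not (s := (Finset.univ : Finset (Fin n)))
      (p := fun i => i < σ i)
  simp only [not_lt] at h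
  simpa [pexc] using h

lemma pexc_add_drops (σ : Equiv.Perm (Fin n)) (hσ : ∀ i, σ i ≠ i) :
    pexc σ + (Finset.univ.filter fun i => σ i < i).card = n := by
  have h := pexc_add_compl σ
  have heq : (Finset.univ.filter fun i => σ i ≤ i) = (Finset.univ.filter fun i => σ i < i) := by
    apply Finset.filter_congr
    intro i _
    exact ⟨fun h => lt_of_le_of_ne h (hσ i), le_of_lt⟩
  rwa [heq] at h

/-- Weak excedances of `σ` are excedances of `finRotate ∘ σ`, plus one. -/
lemma aux_wexc_eq (σ : Equiv.Perm (Fin (m+1))) :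
    (Finset.univ.filter fun i => i ≤ σ i).card = pexc (finRotate (m+1) * σ) + 1 := by
  have hset : (Finset.univ.filter fun i => i ≤ σ i)
      = insert (σ⁻¹ (Fin.last m)) (Finset.univ.filter fun i => i < (finRotate (m+1) * σ) i) := by
    ext i
    simp only [Finset.mem_filter, Finset.mem_insert, Finset.mem_univ, true_and,
      Equiv.Perm.mul_apply, finRotate_succ_apply]
    constructor
    · intro h
      by_cases hl : σ i = Fin.last m
      · left; rw [← hl]; simp
      · right
        have h1 : (σ i + 1).val = (σ i).val + 1 :=
          Fin.val_add_one_of_lt (lt_of_le_of_ne (Fin.le_last _) hl)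
        rw [Fin.lt_def, h1]
        exact Nat.lt_succ_of_le h
    · intro h
      rcases h with h | h
      · rw [h]; simp [Fin.le_last]
      · by_cases hl : σ i = Fin.last m
        · rw [hl] at h; simp [Fin.lt_def] at h
        · have h1 : (σ i + 1).val = (σ i).val + 1 :=
            Fin.val_add_one_of_lt (lt_of_le_of_ne (Fin.le_last _) hl)
          rw [Fin.lt_def, h1] at h
          exact Nat.lt_succ_iff.mp h
  rw [hset, Finset.card_insert_of_notMem, pexc]
  simp only [Finset.mem_filter, Finset.mem_univ, true_and, Equiv.Perm.mul_apply,
    finRotate_succ_apply, not_lt]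
  have h2 : σ (σ⁻¹ (Fin.last m)) = Fin.last m := by simp
  rw [h2]
  simp [Fin.last_add_one]

/-! #### Existence: the four properties -/

lemma aux_d0 : derangementPoly 0 = 1 := by
  rw [derangementPoly]
  rw [Finset.filter_true_of_mem (fun σ _ => fun i => i.elim0)]
  simp

lemma aux_A0 : eulerianPoly 0 = 1 := by
  rw [eulerianPoly]
  simp

lemma aux_dDeg (n : ℕ) : (derangementPoly n).natDegree ≤ n := by
  apply Polynomial.natDegree_sum_le_of_forall_le
  intro σ _
  rw [Polynomial.natDegree_X_pow]
  simpa using (Finset.card_filter_le Finset.univ fun i => i < σ i)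

lemma aux_reflect_d (n : ℕ) : reflect n (derangementPoly n) = derangementPoly n := by
  rw [derangementPoly, aux_reflect_sum]
  have step1 : ∀ σ ∈ Finset.univ.filter (fun σ : Equiv.Perm (Fin n) => ∀ i, σ i ≠ i),
      reflect n ((X : Polynomial ℤ) ^ (Finset.univ.filter fun i => i < σ i).card)
        = X ^ (Finset.univ.filter fun i => σ i < i).card := by
    intro σ hσ
    have hle : (Finset.univ.filter fun i => i < σ i).card ≤ n := pexc_le σ
    rw [reflect_monomial, revAt_le hle]
    congr 1
    have := pexc_add_drops σ (by simpa using (Finset.mem_filter.mp hσ).2)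
    simp only [pexc] at this
    omega
  rw [Finset.sum_congr rfl step1]
  apply Finset.sum_nbij' (i := fun σ => σ⁻¹) (j := fun σ => σ⁻¹)
  · intro σ hσ
    simp only [Finset.mem_filter, Finset.mem_univ, true_and] at hσ ⊢
    intro i hi
    exact hσ i (by simpa using (congrArg σ hi).symm)
  · intro σ hσ
    simp only [Finset.mem_filter, Finset.mem_univ, true_and] at hσ ⊢
    intro i hi
    exact hσ i (by simpa using (congrArg σ hi).symm)
  · intro σ _; simp
  · intro σ _; simp
  · intro σ _
    congr 1
    have := aux_card_lt_inv σ⁻¹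
    simpa using this

lemma aux_reflect_A (n : ℕ) (hn : 1 ≤ n) : reflect n (eulerianPoly n) = X * eulerianPoly n := by
  obtain ⟨m, rfl⟩ : ∃ m, n = m + 1 := ⟨n - 1, by omega⟩
  rw [eulerianPoly, aux_reflect_sum]
  have step1 : ∀ σ ∈ (Finset.univ : Finset (Equiv.Perm (Fin (m+1)))),
      reflect (m+1) ((X : Polynomial ℤ) ^ (Finset.univ.filter fun i => i < σ i).card)
        = X ^ (Finset.univ.filter fun i => σ i ≤ i).card := by
    intro σ _
    have hle : (Finset.univ.filter fun i => i < σ i).card ≤ m + 1 := pexc_le σ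
    rw [reflect_monomial, revAt_le hle]
    congr 1
    have := pexc_add_compl σ
    simp only [pexc] at this
    omega
  rw [Finset.sum_congr rfl step1]
  have step2 : ∑ σ : Equiv.Perm (Fin (m+1)),
        (X : Polynomial ℤ) ^ (Finset.univ.filter fun i => σ i ≤ i).card
      = ∑ σ : Equiv.Perm (Fin (m+1)),
        (X : Polynomial ℤ) ^ (Finset.univ.filter fun i => i ≤ σ i).card := by
    apply Fintype.sum_equiv (Equiv.inv (Equiv.Perm (Fin (m+1))))
    intro σ
    congr 1
    simpa using (aux_card_le_inv σ⁻¹)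
  rw [step2]
  have step3 : ∑ σ : Equiv.Perm (Fin (m+1)),
        (X : Polynomial ℤ) ^ (Finset.univ.filter fun i => i ≤ σ i).card
      = ∑ σ : Equiv.Perm (Fin (m+1)), (X : Polynomial ℤ) ^ (pexc σ + 1) := by
    apply Fintype.sum_equiv (Equiv.mulLeft (finRotate (m+1)))
    intro σ
    rw [aux_wexc_eq σ]
    rfl
  rw [step3, Finset.mul_sum]
  apply Finset.sum_congr rfl
  intro σ _
  rw [pow_succ, pexc, mul_comm]

/-- Permutations whose non-fixed-point set is exactly `s` (with `#s = k`) contribute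
the `k`-th derangement polynomial. -/
lemma aux_fiber_sum {n k : ℕ} (s : Finset (Fin n)) (hs : s.card = k) :
    ∑ σ ∈ Finset.univ.filter
        (fun σ : Equiv.Perm (Fin n) => (Finset.univ.filter fun i => σ i ≠ i) = s),
      (X : Polynomial ℤ) ^ (Finset.univ.filter fun i => i < σ i).card
    = derangementPoly k := by
  classical
  rw [derangementPoly]
  symm
  set o := s.orderIsoOfFin hs with ho
  set f : Fin k ≃ {x : Fin n // x ∈ s} := o.toEquiv with hf
  apply Finset.sum_bij (i := fun (δ : Equiv.Perm (Fin k)) _ => δ.extendDomain f)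
  · -- maps into the fiber
    intro δ hδ
    simp only [Finset.mem_filter, Finset.mem_univ, true_and] at hδ ⊢
    ext x
    simp only [Finset.mem_filter, Finset.mem_univ, true_and]
    constructor
    · intro hne
      by_contra hx
      exact hne (Equiv.Perm.extendDomain_apply_not_subtype δ f hx)
    · intro hx hEq
      rw [Equiv.Perm.extendDomain_apply_subtype δ f hx] at hEq
      have : f (δ (f.symm ⟨x, hx⟩)) = f (f.symm ⟨x, hx⟩) := by
        apply Subtype.ext
        simpa using hEq
      exact hδ (f.symm ⟨x, hx⟩) (by apply f.injective.eq_iff.mp this)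
  · -- injective
    intro δ₁ h₁ δ₂ h₂ hEq
    ext a
    have := congrArg (fun σ : Equiv.Perm (Fin n) => σ (f a)) hEq
    rw [Equiv.Perm.extendDomain_apply_image, Equiv.Perm.extendDomain_apply_image] at this
    exact congrArg Fin.val (f.injective (Subtype.ext (by exact_mod_cast this)))
  · -- surjective
    intro σ hσ
    simp only [Finset.mem_filter, Finset.mem_univ, true_and] at hσ
    have hmem : ∀ x, x ∈ s ↔ σ x ≠ x := by
      intro x; rw [← hσ]; simp
    have sp : ∀ x, x ∈ s ↔ σ x ∈ s := by
      intro x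
      constructor
      · intro hx
        by_contra hsx
        have h1 : σ (σ x) = σ x := by
          by_contra h2
          exact hsx ((hmem (σ x)).mpr h2)
        exact (hmem x).mp hx (σ.injective h1)
      · intro hsx
        by_contra hx
        have h1 : σ x = x := by
          by_contra h2
          exact hx ((hmem x).mpr h2)
        rw [h1] at hsx
        exact hx hsx
    refine ⟨f.symm.permCongr (σ.subtypePerm (fun x => (sp x).symm)), ?_, ?_⟩
    · simp only [Finset.mem_filter, Finset.mem_univ, true_and]
      intro a hEq
      simp only [Equiv.permCongr_apply, Equiv.symm_symm] at hEq
      have h1 : σ.subtypePerm (fun x => (sp x).symm) (f a) = f a := by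
        apply f.symm.injective
        simpa using hEq
      have h2 : σ ↑(f a) = ↑(f a) := congrArg Subtype.val h1
      exact (hmem ↑(f a)).mp (f a).2 h2
    · apply Equiv.ext
      intro x
      by_cases hx : x ∈ s
      · rw [Equiv.Perm.extendDomain_apply_subtype _ f hx]
        simp [Equiv.Perm.subtypePerm_apply]
      · rw [Equiv.Perm.extendDomain_apply_not_subtype _ f hx]
        by_contra hne
        exact hx ((hmem x).mpr (fun h => hne h.symm))
  · -- statistic preserved
    intro δ hδ
    congr 1
    apply Finset.card_bij (i := fun a _ => (f a : Fin n))
    · intro a ha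
      simp only [Finset.mem_filter, Finset.mem_univ, true_and] at ha ⊢
      rw [Equiv.Perm.extendDomain_apply_image]
      have h1 : (f a : {x // x ∈ s}) < f (δ a) := o.lt_iff_lt.mpr ha
      exact Subtype.coe_lt_coe.mpr h1
    · intro a₁ h₁ a₂ h₂ hEq
      exact f.injective (Subtype.ext hEq)
    · intro x hx
      simp only [Finset.mem_filter, Finset.mem_univ, true_and] at hx
      have hxs : x ∈ s := by
        by_contra hxs
        rw [Equiv.Perm.extendDomain_apply_not_subtype δ f hxs] at hx
        exact lt_irrefl _ hx
      refine ⟨f.symm ⟨x, hxs⟩, ?_, by simp⟩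
      simp only [Finset.mem_filter, Finset.mem_univ, true_and]
      have h1 : δ.extendDomain f x = ↑(f (δ (f.symm ⟨x, hxs⟩))) :=
        Equiv.Perm.extendDomain_apply_subtype δ f hxs
      rw [h1] at hx
      have h2 : (⟨x, hxs⟩ : {y : Fin n // y ∈ s}) < f (δ (f.symm ⟨x, hxs⟩)) :=
        Subtype.coe_lt_coe.mp hx
      apply o.lt_iff_lt.mp
      show f (f.symm ⟨x, hxs⟩) < f (δ (f.symm ⟨x, hxs⟩))
      rw [Equiv.apply_symm_apply]
      exact h2

lemma aux_binom (n : ℕ) : eulerianPoly n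
    = ∑ k ∈ Finset.range (n + 1), (n.choose k : Polynomial ℤ) * derangementPoly k := by
  classical
  rw [eulerianPoly]
  rw [← Finset.sum_fiberwise_of_maps_to
        (g := fun σ : Equiv.Perm (Fin n) => Finset.univ.filter fun i => σ i ≠ i)
        (t := (Finset.univ : Finset (Fin n)).powerset)
        (fun σ _ => Finset.mem_powerset.mpr (Finset.filter_subset _ _))
        (fun σ => (X : Polynomial ℤ) ^ (Finset.univ.filter fun i => i < σ i).card)]
  rw [Finset.sum_powerset]
  rw [Finset.card_univ, Fintype.card_fin]
  apply Finset.sum_congr rfl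
  intro k _
  have hcongr : ∀ s ∈ Finset.powersetCard k (Finset.univ : Finset (Fin n)),
      (∑ σ ∈ Finset.univ.filter
          (fun σ : Equiv.Perm (Fin n) => (Finset.univ.filter fun i => σ i ≠ i) = s),
        (X : Polynomial ℤ) ^ (Finset.univ.filter fun i => i < σ i).card)
      = derangementPoly k :=
    fun s hsk => aux_fiber_sum s (Finset.mem_powersetCard.mp hsk).2
  rw [Finset.sum_congr rfl hcongr, Finset.sum_const, Finset.card_powersetCard,
    Finset.card_univ, Fintype.card_fin, nsmul_eq_mul]

lemma aux_existsPart : EulerPairProps eulerianPoly derangementPoly :=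
  ⟨aux_d0, aux_A0, aux_dDeg, aux_binom, aux_reflect_d, aux_reflect_A⟩

/-! #### Uniqueness -/

lemma aux_one_sub_X_ne : (1 - X : Polynomial ℤ) ≠ 0 := by
  intro h
  have h2 := congrArg (fun p : Polynomial ℤ => p.coeff 1) h
  simp [Polynomial.coeff_one] at h2

lemma aux_key_eq {A d : ℕ → Polynomial ℤ} (h : EulerPairProps A d) (n : ℕ) (hn : 1 ≤ n) :
    (1 - X) * d n = X * (∑ k ∈ Finset.range n, (n.choose k : Polynomial ℤ) * d k)
      - reflect n (∑ k ∈ Finset.range n, (n.choose k : Polynomial ℤ) * d k) := by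
  obtain ⟨hd0, hA0, hdeg, hsum, hrd, hrA⟩ := h
  set S := ∑ k ∈ Finset.range n, (n.choose k : Polynomial ℤ) * d k with hS
  have hA : A n = d n + S := by
    rw [hsum n, Finset.sum_range_succ, Nat.choose_self]
    push_cast
    ring
  have h2 := hrA n hn
  rw [hA, reflect_add, hrd n] at h2
  linear_combination h2

lemma aux_d_unique {A d : ℕ → Polynomial ℤ} (h : EulerPairProps A d) :
    ∀ n, d n = derangementPoly n := by
  intro n
  induction n using Nat.strong_induction_on with
  | _ n ih =>
    match n with
    | 0 => rw [h.1, aux_existsPart.1]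
    | (m+1) =>
      have hS : (∑ k ∈ Finset.range (m+1), ((m+1).choose k : Polynomial ℤ) * d k)
          = ∑ k ∈ Finset.range (m+1), ((m+1).choose k : Polynomial ℤ) * derangementPoly k :=
        Finset.sum_congr rfl fun k hk => by rw [ih k (Finset.mem_range.mp hk)]
      have e1 := aux_key_eq h (m+1) (by omega)
      have e2 := aux_key_eq aux_existsPart (m+1) (by omega)
      rw [hS] at e1
      exact mul_left_cancel₀ aux_one_sub_X_ne (e1.trans e2.symm)

lemma aux_A_unique {A d : ℕ → Polynomial ℤ} (h : EulerPairProps A d) :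
    ∀ n, A n = eulerianPoly n := by
  intro n
  rw [h.2.2.2.1 n, aux_existsPart.2.2.2.1 n]
  exact Finset.sum_congr rfl fun k _ => by rw [aux_d_unique h k]

end Aux

/-- The Eulerian and derangement polynomials form the unique pair of families
satisfying the defining properties. -/
theorem stmt18 :
    EulerPairProps eulerianPoly derangementPoly ∧
    ∀ A d : ℕ → Polynomial ℤ, EulerPairProps A d →
      ∀ n, A n = eulerianPoly n ∧ d n = derangementPoly n := by
  exact ⟨aux_existsPart, fun A d h n => ⟨aux_A_unique h n, aux_d_unique h n⟩⟩
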